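/- Let k be a field, A a finite-dimensional k-algebra, P a finitely generated projective left A-module, and B = End_A(P)^op. Then the following are equivalent: (i) the canonical algebra map A → End_B(Hom_A(P, A))^op, sending a ∈ A to the B-endomorphism f ↦ (p ↦ f(p)·a), is an isomorphism of k-algebras; (ii) for every finitely generated projective left A-module M, the unit map M → Hom_B(Hom_A(P, A), Hom_A(P, M)), sending m to the B-linear map f ↦ (p ↦ f(p)·m), is an isomorphism of A-modules; (iii) for all finitely generated projective left A-modules M, N, the natural map Hom_A(M, N) → Hom_B(Hom_A(P, M), Hom_A(P, N)), g ↦ (f ↦ g ∘ f), is bijective. -/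

import Mathlib

universe u

open MulOpposite

set_option synthInstance.maxHeartbeats 400000
set_option maxHeartbeats 1000000

/-- `(A, P)` is a cover of `B = End_A(P)ᵒᵖ`: the Schur functor `Hom_A(P, -)` is fully
faithful on finitely generated projective `A`-modules.  Here a map
`Φ : Hom_A(P, M) → Hom_A(P, N)` is `B`-linear iff it is additive and commutes with
precomposition by every `A`-endomorphism of `P`, so the condition says that for all
finitely generated projective `M`, `N` the natural map
`Hom_A(M, N) → Hom_B(Hom_A(P, M), Hom_A(P, N))`, `g ↦ (f ↦ g ∘ f)`, is bijective. -/
def IsCover (A : Type u) [Ring A] (P : Type u) [AddCommGroup P] [Module A P] : Prop :=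
  ∀ (M N : Type u) [AddCommGroup M] [Module A M] [AddCommGroup N] [Module A N],
    Module.Finite A M → Module.Projective A M →
    Module.Finite A N → Module.Projective A N →
    (Function.Injective fun (g : M →ₗ[A] N) => fun f : P →ₗ[A] M => g ∘ₗ f) ∧
    (∀ Φ : (P →ₗ[A] M) → (P →ₗ[A] N),
      (∀ f₁ f₂, Φ (f₁ + f₂) = Φ f₁ + Φ f₂) →
      (∀ (f : P →ₗ[A] M) (g : P →ₗ[A] P), Φ (f ∘ₗ g) = Φ f ∘ₗ g) →
      ∃ g : M →ₗ[A] N, ∀ f, Φ f = g ∘ₗ f)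

section Helpers
variable (A P : Type u) [Ring A] [AddCommGroup P] [Module A P]

/-- The right multiplication `f ↦ f(-) · a` on `Hom_A(P, A)`; the canonical algebra map
`A → End_B(Hom_A(P, A))ᵒᵖ` sends `a` to this map. -/
def postMulMap (a : A) (f : P →ₗ[A] A) : P →ₗ[A] A where
  toFun p := f p * a
  map_add' p q := by simp [add_mul]
  map_smul' c p := by simp [mul_assoc]

/-- The unit `M → Hom_B(Hom_A(P, A), Hom_A(P, M))` of the adjunction: it sends `m` to
the `B`-linear map `f ↦ (p ↦ f p • m)`. -/
def unitApply (M : Type u) [AddCommGroup M] [Module A M] (m : M) (f : P →ₗ[A] A) :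
    P →ₗ[A] M where
  toFun p := f p • m
  map_add' p q := by simp [add_smul]
  map_smul' c p := by simp [mul_smul]
end Helpers

section Aux

variable {A P : Type u} [Ring A] [AddCommGroup P] [Module A P]

@[simp] lemma postMulMap_apply (a : A) (f : P →ₗ[A] A) (p : P) :
    postMulMap A P a f p = f p * a := rfl

@[simp] lemma unitApply_apply {M : Type u} [AddCommGroup M] [Module A M] (m : M)
    (f : P →ₗ[A] A) (p : P) : unitApply A P M m f p = f p • m := rfl

lemma unitApply_eq_postMulMap : unitApply A P A = postMulMap A P := by
  funext a f
  ext p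
  simp [smul_eq_mul]

/-- Condition (i) implies condition (ii). -/
lemma i_to_ii
    (hinj : Function.Injective (postMulMap A P))
    (hsurj : ∀ Φ : (P →ₗ[A] A) → (P →ₗ[A] A),
        (∀ f₁ f₂, Φ (f₁ + f₂) = Φ f₁ + Φ f₂) →
        (∀ (f : P →ₗ[A] A) (g : P →ₗ[A] P), Φ (f ∘ₗ g) = Φ f ∘ₗ g) →
        ∃ a : A, ∀ f, Φ f = postMulMap A P a f)
    (M : Type u) [AddCommGroup M] [Module A M]
    (hfM : Module.Finite A M) (hpM : Module.Projective A M) :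
    Function.Injective (unitApply A P M) ∧
      (∀ Φ : (P →ₗ[A] A) → (P →ₗ[A] M),
        (∀ f₁ f₂, Φ (f₁ + f₂) = Φ f₁ + Φ f₂) →
        (∀ (f : P →ₗ[A] A) (g : P →ₗ[A] P), Φ (f ∘ₗ g) = Φ f ∘ₗ g) →
        ∃ m : M, ∀ f, Φ f = unitApply A P M m f) := by
  obtain ⟨n, π, i, -, -, hπi⟩ := Module.Finite.exists_comp_eq_id_of_projective A M
  constructor
  · intro m₁ m₂ h
    have hj : ∀ j : Fin n, i m₁ j = i m₂ j := by
      intro j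
      apply hinj
      funext f
      ext p
      have h1 : f p • m₁ = f p • m₂ := LinearMap.congr_fun (congrFun h f) p
      have h2 : i (f p • m₁) = i (f p • m₂) := congrArg i h1
      rw [map_smul, map_smul] at h2
      have := congrFun h2 j
      simpa [smul_eq_mul] using this
    have : i m₁ = i m₂ := funext hj
    calc m₁ = π (i m₁) := (LinearMap.congr_fun hπi m₁).symm
      _ = π (i m₂) := by rw [this]
      _ = m₂ := LinearMap.congr_fun hπi m₂
  · intro Φ hadd hB
    have key : ∀ j : Fin n, ∃ a : A, ∀ f,
        ((LinearMap.proj j ∘ₗ i) ∘ₗ Φ f : P →ₗ[A] A) = postMulMap A P a f := by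
      intro j
      apply hsurj
      · intro f₁ f₂
        rw [hadd, LinearMap.comp_add]
      · intro f g
        rw [hB]
        ext p
        rfl
    choose a ha using key
    refine ⟨π a, fun f => ?_⟩
    ext p
    have hco : ∀ j : Fin n, i (Φ f p) j = f p * a j := by
      intro j
      exact LinearMap.congr_fun (ha j f) p
    calc Φ f p = π (i (Φ f p)) := (LinearMap.congr_fun hπi _).symm
      _ = π (f p • a) := by
          congr 1
          funext j
          simpa [smul_eq_mul] using hco j
      _ = f p • π a := map_smul π _ _
      _ = unitApply A P M (π a) f p := rfl

end Aux

/-- **(Rouquier).** For a finitely generated projective module `P` over a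
finite-dimensional `k`-algebra `A`, with `B = End_A(P)ᵒᵖ` (where a map between
`Hom_A(P, M)`'s is `B`-linear iff it is additive and commutes with precomposition by
all `A`-endomorphisms of `P`), the following are equivalent:
(i) the canonical algebra map `A → End_B(Hom_A(P, A))ᵒᵖ`, `a ↦ (f ↦ f(-)·a)`, is an
isomorphism; (ii) for every finitely generated projective `M`, the unit
`M → Hom_B(Hom_A(P, A), Hom_A(P, M))` is an isomorphism of `A`-modules;
(iii) the Schur functor `Hom_A(P, -)` is fully faithful on finitely generated
projectives. -/
theorem cover_tfae
    (k A P : Type u) [Field k] [Ring A] [Algebra k A] [FiniteDimensional k A]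
    [AddCommGroup P] [Module A P] [Module.Finite A P]
    (hproj : Module.Projective A P) :
    ((Function.Injective (postMulMap A P) ∧
      (∀ Φ : (P →ₗ[A] A) → (P →ₗ[A] A),
        (∀ f₁ f₂, Φ (f₁ + f₂) = Φ f₁ + Φ f₂) →
        (∀ (f : P →ₗ[A] A) (g : P →ₗ[A] P), Φ (f ∘ₗ g) = Φ f ∘ₗ g) →
        ∃ a : A, ∀ f, Φ f = postMulMap A P a f)) ↔
     (∀ (M : Type u) [AddCommGroup M] [Module A M],
        Module.Finite A M → Module.Projective A M →
        Function.Injective (unitApply A P M) ∧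
        (∀ Φ : (P →ₗ[A] A) → (P →ₗ[A] M),
          (∀ f₁ f₂, Φ (f₁ + f₂) = Φ f₁ + Φ f₂) →
          (∀ (f : P →ₗ[A] A) (g : P →ₗ[A] P), Φ (f ∘ₗ g) = Φ f ∘ₗ g) →
          ∃ m : M, ∀ f, Φ f = unitApply A P M m f))) ∧
    ((∀ (M : Type u) [AddCommGroup M] [Module A M],
        Module.Finite A M → Module.Projective A M →
        Function.Injective (unitApply A P M) ∧
        (∀ Φ : (P →ₗ[A] A) → (P →ₗ[A] M),
          (∀ f₁ f₂, Φ (f₁ + f₂) = Φ f₁ + Φ f₂) →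
          (∀ (f : P →ₗ[A] A) (g : P →ₗ[A] P), Φ (f ∘ₗ g) = Φ f ∘ₗ g) →
          ∃ m : M, ∀ f, Φ f = unitApply A P M m f)) ↔
     IsCover A P) := by
  constructor
  · constructor
    · rintro ⟨h1, h2⟩ M _ _ hfM hpM
      exact i_to_ii h1 h2 M hfM hpM
    · intro hii
      have := hii A inferInstance inferInstance
      rwa [unitApply_eq_postMulMap] at this
  · constructor
    · -- (ii) → IsCover
      intro hii M N _ _ _ _ hfM hpM hfN hpN
      obtain ⟨hNinj, hNsurj⟩ := hii N hfN hpN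
      have hkey : ∀ (g : M →ₗ[A] N) (m : M) (f : P →ₗ[A] A),
          unitApply A P N (g m) f = g ∘ₗ unitApply A P M m f := by
        intro g m f
        ext p
        simp
      constructor
      · intro g g' h
        ext m
        have : unitApply A P N (g m) = unitApply A P N (g' m) := by
          funext f
          rw [hkey, hkey]
          exact congrArg (fun Ψ => Ψ (unitApply A P M m f)) h
        exact hNinj this
      · intro Φ hadd hB
        obtain ⟨n, π, i, -, -, hπi⟩ := Module.Finite.exists_comp_eq_id_of_projective A M
        have hΦ0 : Φ 0 = 0 := by
          have h := hadd 0 0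
          rw [add_zero] at h
          exact (left_eq_add.mp h)
        have hsum : ∀ (F : Fin n → (P →ₗ[A] M)),
            Φ (∑ j, F j) = ∑ j, Φ (F j) := by
          intro F
          classical
          induction (Finset.univ : Finset (Fin n)) using Finset.induction with
          | empty => simpa using hΦ0
          | insert _ _ hx ih =>
            rw [Finset.sum_insert hx, Finset.sum_insert hx, hadd, ih]
        have key : ∀ j : Fin n, ∃ nj : N, ∀ h : P →ₗ[A] A,
            Φ ((π ∘ₗ LinearMap.single A (fun _ => A) j) ∘ₗ h) = unitApply A P N nj h := by
          intro j
          apply hNsurj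
          · intro f₁ f₂
            rw [LinearMap.comp_add, hadd]
          · intro f g
            rw [← LinearMap.comp_assoc, hB]
        choose nv hnv using key
        refine ⟨{ toFun := fun m => ∑ j, i m j • nv j
                  map_add' := by
                    intro m m'
                    simp [map_add, add_smul, Finset.sum_add_distrib]
                  map_smul' := by
                    intro a m
                    simp only [map_smul, Pi.smul_apply, smul_eq_mul, mul_smul,
                      RingHom.id_apply, Finset.smul_sum] }, ?_⟩
        intro f
        have hdecomp : f = ∑ j, (π ∘ₗ LinearMap.single A (fun _ => A) j) ∘ₗ
            ((LinearMap.proj j ∘ₗ i) ∘ₗ f) := by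
          ext p
          simp only [LinearMap.sum_apply, LinearMap.comp_apply, LinearMap.proj_apply,
            LinearMap.single_apply]
          rw [← map_sum, Finset.univ_sum_single]
          exact (LinearMap.congr_fun hπi (f p)).symm
        conv_lhs => rw [hdecomp]
        rw [hsum]
        ext p
        simp only [LinearMap.sum_apply, LinearMap.coe_mk, AddHom.coe_mk,
          LinearMap.comp_apply]
        refine Finset.sum_congr rfl fun j _ => ?_
        have := LinearMap.congr_fun (hnv j ((LinearMap.proj j ∘ₗ i) ∘ₗ f)) p
        simpa using this
    · -- IsCover → (ii)
      intro hc M _ _ hfM hpM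
      obtain ⟨hinj, hsurj⟩ := hc A M inferInstance inferInstance hfM hpM
      constructor
      · intro m m' h
        have e : ∀ m : M, (fun f : P →ₗ[A] A => LinearMap.toSpanSingleton A M m ∘ₗ f) =
            unitApply A P M m := by
          intro m
          funext f
          ext p
          simp [LinearMap.toSpanSingleton]
        have h2 : (fun f : P →ₗ[A] A => LinearMap.toSpanSingleton A M m ∘ₗ f) =
            (fun f : P →ₗ[A] A => LinearMap.toSpanSingleton A M m' ∘ₗ f) := by
          rw [e, e, h]
        have h3 := hinj h2
        have h1 := LinearMap.congr_fun h3 1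
        simpa using h1
      · intro Φ hadd hB
        obtain ⟨g, hg⟩ := hsurj Φ hadd hB
        refine ⟨g 1, fun f => ?_⟩
        rw [hg f]
        ext p
        simp only [LinearMap.comp_apply, unitApply_apply]
        calc g (f p) = g (f p • 1) := by rw [smul_eq_mul, mul_one]
          _ = f p • g 1 := map_smul g _ _
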